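/- Let R be a left artinian ring with Jacobson radical J, let U be a finitely generated uniserial left R-module, and let M be a finitely generated left R-module. If f : M → U is an irreducible injective R-linear map, then there exists an R-module isomorphism φ : J•U → M such that the composite f ∘ φ : J•U → U equals the natural inclusion of the submodule J•U into U. -/

import Mathlib

/-- A module is *uniserial* if its submodules are totally ordered by inclusion. -/
def IsUniserialModule (R M : Type) [Ring R] [AddCommGroup M] [Module R M] : Prop :=
  ∀ N₁ N₂ : Submodule R M, N₁ ≤ N₂ ∨ N₂ ≤ N₁

/-- The Jacobson radical of the ring `R` (the intersection of the maximal left ideals). -/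
noncomputable def ringJacobson (R : Type) [Ring R] : Ideal R :=
  Ideal.jacobson (⊥ : Ideal R)

/-- The submodule `J•M`, where `J` is the Jacobson radical of `R`. -/
noncomputable def radicalSubmodule (R M : Type) [Ring R] [AddCommGroup M] [Module R M] :
    Submodule R M :=
  ringJacobson R • (⊤ : Submodule R M)

/-- The socle of a module: the sum of all of its simple submodules. -/
def socle (R M : Type) [Ring R] [AddCommGroup M] [Module R M] : Submodule R M :=
  sSup {N : Submodule R M | IsSimpleModule R ↥N}

/-- A linear map is a split monomorphism if it has a left inverse. -/
def IsSplitMono {R M N : Type} [Ring R] [AddCommGroup M] [Module R M]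
    [AddCommGroup N] [Module R N] (f : M →ₗ[R] N) : Prop :=
  ∃ g : N →ₗ[R] M, g ∘ₗ f = LinearMap.id

/-- A linear map is a split epimorphism if it has a right inverse. -/
def IsSplitEpi {R M N : Type} [Ring R] [AddCommGroup M] [Module R M]
    [AddCommGroup N] [Module R N] (f : M →ₗ[R] N) : Prop :=
  ∃ g : N →ₗ[R] M, f ∘ₗ g = LinearMap.id

/-- A linear map `f : M → N` is *irreducible* if it is neither a split monomorphism nor a
split epimorphism, and in any factorization `f = g ∘ h`, either `h` is a split monomorphism
or `g` is a split epimorphism. -/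
def IsIrreducibleMap {R M N : Type} [Ring R] [AddCommGroup M] [Module R M]
    [AddCommGroup N] [Module R N] (f : M →ₗ[R] N) : Prop :=
  ¬ IsSplitMono f ∧ ¬ IsSplitEpi f ∧
    ∀ (X : Type) [AddCommGroup X] [Module R X] (h : M →ₗ[R] X) (g : X →ₗ[R] N),
      g ∘ₗ h = f → IsSplitMono h ∨ IsSplitEpi g

/-- A module is *indecomposable* if it is nonzero and is not the internal direct sum of two
nonzero submodules. -/
def IsIndecomposableModule (R M : Type) [Ring R] [AddCommGroup M] [Module R M] : Prop :=
  Nontrivial M ∧ ∀ N₁ N₂ : Submodule R M, IsCompl N₁ N₂ → N₁ = ⊥ ∨ N₂ = ⊥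


section AuxLemmas

open LinearMap Submodule

/-- A simple module is semisimple. -/
theorem auxIJIU_simple_isSemisimple {R M : Type*} [Ring R] [AddCommGroup M] [Module R M]
    (h : IsSimpleModule R M) : IsSemisimpleModule R M := by
  haveI := h
  haveI htop : IsSimpleModule R (⊤ : Submodule R M) := IsSimpleModule.congr Submodule.topEquiv
  exact IsSemisimpleModule.of_sSup_simples_eq_top
    (le_antisymm le_top (le_sSup (show IsSimpleModule R (⊤ : Submodule R M) from htop)))

/-- Over a left artinian ring, the Jacobson radical is a finite intersection of
maximal left ideals. -/
theorem auxIJIU_exists_finset_max (R : Type*) [Ring R] [IsArtinianRing R] :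
    ∃ s : Finset (Ideal R), (∀ m ∈ s, m.IsMaximal) ∧
      s.inf id = Ideal.jacobson (⊥ : Ideal R) := by
  have hwf : WellFounded ((· < ·) : Ideal R → Ideal R → Prop) := IsWellFounded.wf
  obtain ⟨T, hTmem, hmin⟩ := hwf.has_min
    {I : Ideal R | ∃ s : Finset (Ideal R), (∀ m ∈ s, m.IsMaximal) ∧ I = s.inf id}
    ⟨⊤, ∅, by simp, by simp⟩
  obtain ⟨s, hs, rfl⟩ := hTmem
  have hT : ∀ m : Ideal R, m.IsMaximal → s.inf id ≤ m := by
    classical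
    intro m hm
    have hmem : s.inf id ⊓ m ∈
        {I : Ideal R | ∃ t : Finset (Ideal R), (∀ m ∈ t, m.IsMaximal) ∧ I = t.inf id} := by
      refine ⟨insert m s, ?_, ?_⟩
      · intro x hx
        rcases Finset.mem_insert.mp hx with rfl | hx
        · exact hm
        · exact hs x hx
      · rw [Finset.inf_insert]
        exact (inf_comm _ _)
    have hle : s.inf id ⊓ m ≤ s.inf id := inf_le_left
    have : ¬ (s.inf id ⊓ m < s.inf id) := hmin _ hmem
    have heq : s.inf id ⊓ m = s.inf id := hle.lt_or_eq.resolve_left this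
    rw [← heq]
    exact inf_le_right
  refine ⟨s, hs, le_antisymm ?_ ?_⟩
  · exact le_sInf fun J hJ => hT J hJ.2
  · exact Finset.le_inf fun m hm =>
      sInf_le (show m ∈ {J : Ideal R | ⊥ ≤ J ∧ J.IsMaximal} from ⟨bot_le, hs m hm⟩)

/-- The Jacobson radical times a module is contained in every maximal submodule. -/
theorem auxIJIU_jsmul_le_coatom {R U : Type*} [Ring R] [AddCommGroup U] [Module R U]
    {m : Submodule R U} (hm : IsCoatom m) :
    (Ideal.jacobson (⊥ : Ideal R)) • (⊤ : Submodule R U) ≤ m := by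
  rw [Submodule.smul_le]
  intro a ha u _
  by_cases hu : u ∈ m
  · exact m.smul_mem a hu
  -- the left ideal of elements sending u into m
  set I : Ideal R := Submodule.comap (LinearMap.toSpanSingleton R U u) m with hI
  have hI1 : (1 : R) ∉ I := by
    simpa [hI, Submodule.mem_comap, LinearMap.toSpanSingleton_apply] using hu
  have hImax : I.IsMaximal := by
    rw [Ideal.isMaximal_def]
    constructor
    · intro h
      exact hI1 (h ▸ Submodule.mem_top)
    · intro K hK
      obtain ⟨r, hrK, hrI⟩ := SetLike.exists_of_lt hK
      have hru : r • u ∉ m := by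
        simpa [hI, Submodule.mem_comap, LinearMap.toSpanSingleton_apply] using hrI
      have hsup : m ⊔ Submodule.span R {r • u} = ⊤ := by
        apply hm.2
        refine lt_of_le_of_ne le_sup_left (fun h => hru ?_)
        have : Submodule.span R {r • u} ≤ m := by
          rw [h]; exact le_sup_right
        exact this (Submodule.mem_span_singleton_self _)
      have hu' : u ∈ m ⊔ Submodule.span R {r • u} := hsup ▸ Submodule.mem_top
      obtain ⟨y, hy, z, hz, hyz⟩ := Submodule.mem_sup.mp hu'
      obtain ⟨c, rfl⟩ := Submodule.mem_span_singleton.mp hz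
      have hyu : y = ((1 : R) - c * r) • u := by
        rw [sub_smul, one_smul, mul_smul, eq_sub_iff_add_eq]; exact hyz
      have hcr : (1 : R) - c * r ∈ I := Submodule.mem_comap.mpr (by
        rw [LinearMap.toSpanSingleton_apply, ← hyu]; exact hy)
      have h1K : (1 : R) ∈ K := by
        have h1 : (1 : R) - c * r ∈ K := hK.le hcr
        have h2 : c * r ∈ K := K.smul_mem c hrK
        simpa using K.add_mem h1 h2
      exact Submodule.eq_top_iff'.mpr fun x => by
        simpa using K.smul_mem x h1K
  have hJI : Ideal.jacobson (⊥ : Ideal R) ≤ I :=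
    sInf_le (show I ∈ {J : Ideal R | ⊥ ≤ J ∧ J.IsMaximal} from ⟨bot_le, hImax⟩)
  have haI : a ∈ I := hJI ha
  simpa [hI, Submodule.mem_comap, LinearMap.toSpanSingleton_apply] using haI

/-- `R ⧸ A` is a semisimple module when `A` contains the Jacobson radical,
for `R` left artinian. -/
theorem auxIJIU_ss_quot (R : Type*) [Ring R] [IsArtinianRing R] (A : Ideal R)
    (hA : Ideal.jacobson (⊥ : Ideal R) ≤ A) : IsSemisimpleModule R (R ⧸ A) := by
  classical
  obtain ⟨s, hs, hinf⟩ := auxIJIU_exists_finset_max R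
  have hsimp : ∀ i : {x // x ∈ s}, IsSimpleModule R (R ⧸ (i.1 : Ideal R)) := fun i =>
    isSimpleModule_iff_isCoatom.mpr (Ideal.isMaximal_def.mp (hs i.1 i.2))
  haveI hP : IsSemisimpleModule R (∀ i : {x // x ∈ s}, R ⧸ (i.1 : Ideal R)) := by
    refine isSemisimpleModule_of_isSemisimpleModule_submodule'
      (p := fun i => LinearMap.range (LinearMap.single R _ i)) (fun i => ?_)
      (LinearMap.iSup_range_single R _)
    haveI := auxIJIU_simple_isSemisimple (hsimp i)
    have hinj : Function.Injective
        (LinearMap.single R (fun i : {x // x ∈ s} => R ⧸ (i.1 : Ideal R)) i) := by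
      rw [LinearMap.coe_single]
      exact Pi.single_injective i
    exact IsSemisimpleModule.congr (LinearEquiv.ofInjective
      (LinearMap.single R (fun i : {x // x ∈ s} => R ⧸ (i.1 : Ideal R)) i) hinj).symm
  set ψ : R →ₗ[R] (∀ i : {x // x ∈ s}, R ⧸ (i.1 : Ideal R)) :=
    LinearMap.pi (fun i => (i.1 : Ideal R).mkQ) with hψ
  have hker : LinearMap.ker ψ = Ideal.jacobson (⊥ : Ideal R) := by
    rw [hψ, LinearMap.ker_pi, ← hinf]
    simp only [Submodule.ker_mkQ, Finset.inf_eq_iInf]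
    exact le_antisymm (le_iInf₂ fun a ha => iInf_le (fun i : {x // x ∈ s} => (i : Ideal R)) ⟨a, ha⟩)
      (le_iInf fun i => iInf₂_le i.1 i.2)
  have hkerA : LinearMap.ker ψ ≤ A := hker ▸ hA
  haveI hr : IsSemisimpleModule R ↥(LinearMap.range ψ) := inferInstance
  haveI : IsSemisimpleModule R (R ⧸ LinearMap.ker ψ) :=
    IsSemisimpleModule.congr (M := ↥(LinearMap.range ψ)) (LinearMap.quotKerEquivRange ψ)
  exact IsSemisimpleModule.congr
    (Submodule.quotientQuotientEquivQuotient (LinearMap.ker ψ) A hkerA).symm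

/-- A module over a left artinian ring killed by the Jacobson radical is semisimple. -/
theorem auxIJIU_ss (R V : Type*) [Ring R] [IsArtinianRing R] [AddCommGroup V] [Module R V]
    (h : ∀ a ∈ Ideal.jacobson (⊥ : Ideal R), ∀ v : V, a • v = (0 : V)) :
    IsSemisimpleModule R V := by
  refine isSemisimpleModule_of_isSemisimpleModule_submodule'
    (p := fun v : V => Submodule.span R {v}) (fun v => ?_)
    (top_unique fun x _ => Submodule.mem_iSup_of_mem x (Submodule.mem_span_singleton_self x))
  haveI := auxIJIU_ss_quot R (LinearMap.ker (LinearMap.toSpanSingleton R V v))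
    (fun a ha => LinearMap.mem_ker.mpr (by
      rw [LinearMap.toSpanSingleton_apply]; exact h a ha v))
  exact IsSemisimpleModule.congr
    ((LinearEquiv.ofEq _ _ (LinearMap.span_singleton_eq_range R V v)).trans
      (LinearMap.quotKerEquivRange (LinearMap.toSpanSingleton R V v)).symm)

end AuxLemmas

/-- If `R` is a left artinian ring, `U` a finitely generated uniserial `R`-module, `M` a
finitely generated `R`-module, and `f : M → U` an irreducible injective `R`-linear map, then
there is an isomorphism `φ : J•U ≃ M` with `f ∘ φ` equal to the inclusion `J•U ↪ U`. -/
theorem irreducible_injective_into_uniserial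
    (R U M : Type) [Ring R] [IsArtinianRing R]
    [AddCommGroup U] [Module R U] [Module.Finite R U]
    [AddCommGroup M] [Module R M] [Module.Finite R M]
    (hU : IsUniserialModule R U)
    (f : M →ₗ[R] U) (hirr : IsIrreducibleMap f) (hinj : Function.Injective f) :
    ∃ φ : (radicalSubmodule R U) ≃ₗ[R] M,
      f ∘ₗ (φ : radicalSubmodule R U →ₗ[R] M) = (radicalSubmodule R U).subtype := by
  classical
  have hTdef : radicalSubmodule R U =
      (Ideal.jacobson (⊥ : Ideal R)) • (⊤ : Submodule R U) := rfl
  -- M is nontrivial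
  have hM : Nontrivial M := by
    by_contra h
    rw [not_nontrivial_iff_subsingleton] at h
    exact hirr.1 ⟨0, LinearMap.ext fun x => Subsingleton.elim _ _⟩
  obtain ⟨x₀, y₀, hxy⟩ := hM
  haveI hM' : Nontrivial M := ⟨x₀, y₀, hxy⟩
  haveI hU0 : Nontrivial U := ⟨f x₀, f y₀, fun h => hxy (hinj h)⟩
  have hcoat : IsCoatomic (Submodule R U) :=
    CompleteLattice.coatomic_of_top_compact
      ((Submodule.fg_iff_compact _).mp (Module.finite_def.mp ‹Module.Finite R U›))
  -- J • U is a proper submodule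
  have hTne : (Ideal.jacobson (⊥ : Ideal R)) • (⊤ : Submodule R U) ≠ ⊤ := by
    rcases hcoat.eq_top_or_exists_le_coatom (⊥ : Submodule R U) with h | ⟨c, hc, _⟩
    · exfalso
      obtain ⟨u, hu⟩ := exists_ne (0 : U)
      exact hu ((Submodule.mem_bot _).mp (h.ge Submodule.mem_top))
    · intro hT
      have hle := auxIJIU_jsmul_le_coatom (R := R) hc
      rw [hT] at hle
      exact hc.1 (top_le_iff.mp hle)
  -- range f is proper
  have hrne : LinearMap.range f ≠ ⊤ := by
    intro h
    have hsurj : Function.Surjective f := LinearMap.range_eq_top.mp h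
    exact hirr.1 ⟨(LinearEquiv.ofBijective f ⟨hinj, hsurj⟩).symm.toLinearMap,
      LinearMap.ext fun x => (LinearEquiv.ofBijective f ⟨hinj, hsurj⟩).symm_apply_apply x⟩
  -- the key step: any submodule containing range f is range f or all of U
  have key : ∀ N : Submodule R U, LinearMap.range f ≤ N →
      N = LinearMap.range f ∨ N = ⊤ := by
    intro N hN
    have hf'mem : ∀ x : M, f x ∈ N := fun x => hN ⟨x, rfl⟩
    set f' : M →ₗ[R] N := f.codRestrict N hf'mem with hf'
    have hfact : N.subtype ∘ₗ f' = f := LinearMap.subtype_comp_codRestrict f N hf'mem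
    rcases hirr.2.2 ↥N f' N.subtype hfact with hmono | hepi
    · obtain ⟨g, hg⟩ := hmono
      set F : ↥N →ₗ[R] ↥(LinearMap.range f') := f'.rangeRestrict ∘ₗ g with hF
      have hproj : ∀ x : ↥(LinearMap.range f'), F ↑x = x := by
        rintro ⟨x, m, rfl⟩
        have hgm : g (f' m) = m := by
          have h1 := LinearMap.ext_iff.mp hg m
          simpa using h1
        exact Subtype.ext (by show f' (g (f' m)) = f' m; rw [hgm])
      have hcompl : IsCompl (LinearMap.range f') (LinearMap.ker F) :=
        LinearMap.isCompl_of_proj hproj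
      -- N is uniserial
      have huni : ∀ p q : Submodule R ↥N, p ≤ q ∨ q ≤ p := by
        have hback : ∀ p q : Submodule R ↥N,
            p.map N.subtype ≤ q.map N.subtype → p ≤ q := by
          intro p q h z hz
          have hmem : (z : U) ∈ q.map N.subtype := h ⟨z, hz, rfl⟩
          obtain ⟨w, hw, hwz⟩ := hmem
          have : w = z := Subtype.ext hwz
          exact this ▸ hw
        intro p q
        rcases hU (p.map N.subtype) (q.map N.subtype) with h | h
        · exact Or.inl (hback _ _ h)
        · exact Or.inr (hback _ _ h)
      rcases huni (LinearMap.range f') (LinearMap.ker F) with hle | hle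
      · -- then M would be trivial
        exfalso
        have hbot : LinearMap.range f' = ⊥ :=
          le_bot_iff.mp (hcompl.inf_eq_bot ▸ le_inf le_rfl hle)
        obtain ⟨m₀, hm₀⟩ := exists_ne (0 : M)
        have hmem : f' m₀ ∈ LinearMap.range f' := ⟨m₀, rfl⟩
        rw [hbot, Submodule.mem_bot] at hmem
        have hfm : f m₀ = 0 := by
          rw [← hfact]
          show N.subtype (f' m₀) = 0
          rw [hmem]; simp
        exact hm₀ (hinj (by rw [hfm, map_zero]))
      · -- then N = range f
        left
        have hker : LinearMap.ker F = ⊥ :=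
          le_bot_iff.mp (hcompl.inf_eq_bot ▸ le_inf hle le_rfl)
        have htop : LinearMap.range f' = ⊤ := by
          have h1 := hcompl.sup_eq_top
          rwa [hker, sup_bot_eq] at h1
        refine le_antisymm ?_ hN
        intro n hn
        obtain ⟨m₁, hm₁⟩ : ∃ m₁, f' m₁ = (⟨n, hn⟩ : N) :=
          (htop ▸ Submodule.mem_top : (⟨n, hn⟩ : N) ∈ LinearMap.range f')
        exact ⟨m₁, by rw [← hfact]; show N.subtype (f' m₁) = n; rw [hm₁]; rfl⟩
    · obtain ⟨g, hg⟩ := hepi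
      right
      rw [eq_top_iff]
      intro u _
      have h1 : N.subtype (g u) = u := LinearMap.ext_iff.mp hg u
      exact h1 ▸ (g u).2
  -- J • U ≤ range f
  have hTle : (Ideal.jacobson (⊥ : Ideal R)) • (⊤ : Submodule R U) ≤ LinearMap.range f := by
    rcases key ((Ideal.jacobson (⊥ : Ideal R)) • (⊤ : Submodule R U) ⊔ LinearMap.range f)
      le_sup_right with h | h
    · exact le_sup_left.trans h.le
    · rcases hU ((Ideal.jacobson (⊥ : Ideal R)) • (⊤ : Submodule R U)) (LinearMap.range f)
        with hle | hle
      · exact hle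
      · exact absurd ((sup_eq_left.mpr hle).symm.trans h) hTne
  -- range f ≤ J • U, via semisimplicity of U ⧸ J•U
  have hrle : LinearMap.range f ≤ (Ideal.jacobson (⊥ : Ideal R)) • (⊤ : Submodule R U) := by
    set T := (Ideal.jacobson (⊥ : Ideal R)) • (⊤ : Submodule R U) with hTd
    haveI hss : IsSemisimpleModule R (U ⧸ T) := by
      apply auxIJIU_ss
      intro a ha v
      obtain ⟨u, rfl⟩ := T.mkQ_surjective v
      have hmem : a • u ∈ T := Submodule.smul_mem_smul ha Submodule.mem_top
      rw [← LinearMap.map_smul, Submodule.mkQ_apply, Submodule.Quotient.mk_eq_zero]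
      exact hmem
    have hWuni : ∀ p q : Submodule R (U ⧸ T), p ≤ q ∨ q ≤ p := by
      intro p q
      rcases hU (p.comap T.mkQ) (q.comap T.mkQ) with h | h
      · exact Or.inl ((Submodule.comap_le_comap_iff_of_surjective T.mkQ_surjective).mp h)
      · exact Or.inr ((Submodule.comap_le_comap_iff_of_surjective T.mkQ_surjective).mp h)
    set Nb := (LinearMap.range f).map T.mkQ with hNb
    obtain ⟨C, hC⟩ := ComplementedLattice.exists_isCompl Nb
    rcases hWuni Nb C with h | h
    · have hNbbot : Nb = ⊥ := le_bot_iff.mp (hC.inf_eq_bot ▸ le_inf le_rfl h)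
      intro u hu
      have hmem : T.mkQ u ∈ Nb := ⟨u, hu, rfl⟩
      rw [hNbbot, Submodule.mem_bot] at hmem
      rwa [← Submodule.ker_mkQ T, LinearMap.mem_ker]
    · have hCbot : C = ⊥ := le_bot_iff.mp (hC.inf_eq_bot ▸ le_inf h le_rfl)
      exfalso
      have hNbtop : Nb = ⊤ := by
        have h1 := hC.sup_eq_top
        rwa [hCbot, sup_bot_eq] at h1
      have hsup : (LinearMap.range f) ⊔ T = ⊤ := by
        have h2 : (Nb.comap T.mkQ) = ⊤ := by rw [hNbtop, Submodule.comap_top]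
        rwa [hNb, Submodule.comap_map_eq, Submodule.ker_mkQ] at h2
      exact hrne ((sup_eq_left.mpr hTle).symm.trans hsup)
  have hrange : LinearMap.range f = radicalSubmodule R U := by
    rw [hTdef]
    exact le_antisymm hrle hTle
  have h1 : ∀ y : ↥(LinearMap.range f),
      f ((LinearEquiv.ofInjective f hinj).symm y) = (y : U) := by
    intro y
    conv_rhs => rw [← (LinearEquiv.ofInjective f hinj).apply_symm_apply y]
    rw [LinearEquiv.ofInjective_apply]
  refine ⟨(LinearEquiv.ofEq _ _ hrange.symm).trans (LinearEquiv.ofInjective f hinj).symm, ?_⟩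
  refine LinearMap.ext fun z => ?_
  exact h1 ((LinearEquiv.ofEq _ _ hrange.symm) z)
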